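/- Let ξ(x) = e^{−(x+h)²/(2σ)} + e^{−(x−h)²/(2σ)} with σ>0, h>0. The equation ξ'(x)=0 is equivalent to x = h·tanh(xh/σ), and this equation has a strictly positive solution if and only if h² > σ; in that case the positive solution is unique. -/

import Mathlib

open Real Filter Set Topology

lemma aux_hasDerivAt_tanh (x : ℝ) :
    HasDerivAt Real.tanh ((Real.cosh x ^ 2)⁻¹) x := by
  have h := (Real.hasDerivAt_sinh x).div (Real.hasDerivAt_cosh x) (Real.cosh_pos x).ne'
  have heq : Real.tanh = fun y => Real.sinh y / Real.cosh y :=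
    funext fun y => Real.tanh_eq_sinh_div_cosh y
  rw [heq]
  refine h.congr_deriv ?_
  rw [inv_eq_one_div, ← Real.cosh_sq_sub_sinh_sq x]; ring

lemma aux_tanh_lt_self {t : ℝ} (ht : 0 < t) : Real.tanh t < t := by
  have key : Real.sinh t < t * Real.cosh t := by
    have hmono : StrictMonoOn (fun u => u * Real.cosh u - Real.sinh u) (Set.Ici 0) := by
      apply strictMonoOn_of_deriv_pos (convex_Ici 0)
      · fun_prop
      · intro u hu
        rw [interior_Ici, Set.mem_Ioi] at hu
        have hd : HasDerivAt (fun u => u * Real.cosh u - Real.sinh u) (u * Real.sinh u) u := by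
          have := ((hasDerivAt_id u).mul (Real.hasDerivAt_cosh u)).sub (Real.hasDerivAt_sinh u)
          refine this.congr_deriv ?_
          simp only [id_eq]; ring
        rw [hd.deriv]
        exact mul_pos hu (Real.sinh_pos_iff.mpr hu)
    have := hmono (Set.self_mem_Ici) (Set.mem_Ici.mpr ht.le) ht
    simpa using this
  rw [Real.tanh_eq_sinh_div_cosh, div_lt_iff₀ (Real.cosh_pos t)]
  linarith

lemma aux_tanh_lt_one (t : ℝ) : Real.tanh t < 1 := by
  rw [Real.tanh_eq_sinh_div_cosh, div_lt_one (Real.cosh_pos t)]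
  rw [Real.sinh_eq, Real.cosh_eq]
  have := Real.exp_pos (-t)
  linarith

theorem stmt_5 (σ h : ℝ) (hσ : 0 < σ) (hh : 0 < h) :
    (∀ x : ℝ,
      deriv (fun y => Real.exp (-(y + h)^2 / (2 * σ)) + Real.exp (-(y - h)^2 / (2 * σ))) x = 0
        ↔ x = h * Real.tanh (x * h / σ)) ∧
    ((∃ x : ℝ, 0 < x ∧ x = h * Real.tanh (x * h / σ)) ↔ σ < h^2) ∧
    (σ < h^2 → ∃! x : ℝ, 0 < x ∧ x = h * Real.tanh (x * h / σ)) := by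
  have hσ' : σ ≠ 0 := hσ.ne'
  set F : ℝ → ℝ := fun x => h * Real.tanh (x * h / σ) - x with hFdef
  set D : ℝ → ℝ := fun x => h * ((Real.cosh (x * h / σ) ^ 2)⁻¹ * (h / σ)) - 1 with hDdef
  have hF : ∀ x : ℝ, HasDerivAt F (D x) x := by
    intro x
    have hi : HasDerivAt (fun y : ℝ => y * h / σ) (h / σ) x := by
      have := ((hasDerivAt_id x).mul_const h).div_const σ
      simpa using this
    have ht := ((aux_hasDerivAt_tanh (x * h / σ)).comp x hi).const_mul h
    have h2 := ht.sub (hasDerivAt_id x)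
    rw [hFdef, hDdef]
    exact h2
  have hcont : Continuous F := by
    have htanh : Continuous Real.tanh := by
      have heq : Real.tanh = fun y => Real.sinh y / Real.cosh y :=
        funext fun y => Real.tanh_eq_sinh_div_cosh y
      rw [heq]
      exact Real.continuous_sinh.div Real.continuous_cosh fun y => (Real.cosh_pos y).ne'
    rw [hFdef]; fun_prop
  have hF0 : F 0 = 0 := by simp [hFdef, Real.tanh_zero]
  -- uniqueness
  have huniq : ∀ a b : ℝ, (0 < a ∧ a = h * Real.tanh (a * h / σ)) →
      (0 < b ∧ b = h * Real.tanh (b * h / σ)) → a = b := by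
    have key : ∀ a b : ℝ, 0 < a → a < b → F a = 0 → F b = 0 → False := by
      intro a b ha hab hFa hFb
      obtain ⟨c₁, hc₁, hDc₁⟩ := exists_hasDerivAt_eq_slope F D ha
        hcont.continuousOn (fun x _ => hF x)
      obtain ⟨c₂, hc₂, hDc₂⟩ := exists_hasDerivAt_eq_slope F D hab
        hcont.continuousOn (fun x _ => hF x)
      rw [hFa, hF0] at hDc₁
      rw [hFa, hFb] at hDc₂
      norm_num at hDc₁ hDc₂
      have hc1pos : 0 < c₁ := hc₁.1
      have hlt : c₁ < c₂ := lt_trans hc₁.2 hc₂.1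
      have hu1 : 0 < c₁ * h / σ := by positivity
      have hu : c₁ * h / σ < c₂ * h / σ := by
        apply div_lt_div_of_pos_right _ hσ
        exact mul_lt_mul_of_pos_right hlt hh
      have hcosh : Real.cosh (c₁ * h / σ) < Real.cosh (c₂ * h / σ) := by
        rw [Real.cosh_lt_cosh, abs_of_pos hu1, abs_of_pos (lt_trans hu1 hu)]
        exact hu
      have hsq : Real.cosh (c₁ * h / σ) ^ 2 < Real.cosh (c₂ * h / σ) ^ 2 := by
        have := Real.cosh_pos (c₁ * h / σ)
        nlinarith
      have hinv : (Real.cosh (c₂ * h / σ) ^ 2)⁻¹ < (Real.cosh (c₁ * h / σ) ^ 2)⁻¹ := by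
        have h1 : (0:ℝ) < Real.cosh (c₁ * h / σ) ^ 2 := by positivity
        exact inv_strictAnti₀ h1 hsq
      have hD12 : D c₂ < D c₁ := by
        rw [hDdef]
        have hhs : 0 < h * (h / σ) := by positivity
        simp only []
        nlinarith
      rw [hDc₁, hDc₂] at hD12
      exact lt_irrefl 0 hD12
    intro a b hpa hpb
    obtain ⟨ha, hea⟩ := hpa
    obtain ⟨hb, heb⟩ := hpb
    have hFa : F a = 0 := by simp only [hFdef]; linarith
    have hFb : F b = 0 := by simp only [hFdef]; linarith
    rcases lt_trichotomy a b with hlt | heq | hgt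
    · exact (key a b ha hlt hFa hFb).elim
    · exact heq
    · exact (key b a hb hgt hFb hFa).elim
  -- existence
  have hex : σ < h^2 → ∃ x : ℝ, 0 < x ∧ x = h * Real.tanh (x * h / σ) := by
    intro hlt
    have hD0 : 0 < D 0 := by
      have hD0e : D 0 = h * (h / σ) - 1 := by simp [hDdef]
      rw [hD0e, sub_pos, ← mul_div_assoc, lt_div_iff₀ hσ]
      nlinarith
    have hslope : Tendsto (slope F 0) (𝓝[>] (0:ℝ)) (𝓝 (D 0)) := by
      have hts := hasDerivAt_iff_tendsto_slope.mp (hF 0)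
      refine hts.mono_left (nhdsWithin_mono 0 ?_)
      intro y hy
      simp only [Set.mem_compl_iff, Set.mem_singleton_iff]
      exact ne_of_gt hy
    have hev : ∀ᶠ y in 𝓝[>] (0:ℝ), 0 < slope F 0 y ∧ 0 < y := by
      filter_upwards [hslope.eventually (lt_mem_nhds hD0), self_mem_nhdsWithin] with y h1 h2
      exact ⟨h1, h2⟩
    obtain ⟨y, hy1, hy2⟩ := hev.exists
    have hFy : 0 < F y := by
      rw [slope_def_field, hF0, sub_zero, sub_zero] at hy1
      rcases div_pos_iff.mp hy1 with ⟨h1, _⟩ | ⟨_, h2⟩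
      · exact h1
      · linarith
    have hFh : F h < 0 := by
      have := aux_tanh_lt_one (h * h / σ)
      simp only [hFdef]
      nlinarith
    have hyh : y < h := by
      have := aux_tanh_lt_one (y * h / σ)
      simp only [hFdef] at hFy
      nlinarith
    obtain ⟨c, hc, hFc⟩ := intermediate_value_Icc' hyh.le hcont.continuousOn
      (Set.mem_Icc.mpr ⟨hFh.le, hFy.le⟩)
    refine ⟨c, lt_of_lt_of_le hy2 hc.1, ?_⟩
    simp only [hFdef] at hFc
    linarith
  refine ⟨?_, ⟨?_, fun hlt => hex hlt⟩, fun hlt => ?_⟩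
  · -- Part 1
    intro x
    have i1 : HasDerivAt (fun y : ℝ => -(y + h)^2 / (2 * σ)) (-(x + h) / σ) x := by
      have h1 : HasDerivAt (fun y : ℝ => y + h) 1 x := (hasDerivAt_id x).add_const h
      have := ((h1.pow 2).neg).div_const (2 * σ)
      refine this.congr_deriv ?_
      field_simp; ring
    have i2 : HasDerivAt (fun y : ℝ => -(y - h)^2 / (2 * σ)) (-(x - h) / σ) x := by
      have h1 : HasDerivAt (fun y : ℝ => y - h) 1 x := (hasDerivAt_id x).sub_const h
      have := ((h1.pow 2).neg).div_const (2 * σ)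
      refine this.congr_deriv ?_
      field_simp; ring
    have e1 := i1.exp
    have e2 := i2.exp
    rw [(show HasDerivAt (fun y => Real.exp (-(y + h)^2 / (2 * σ)) + Real.exp (-(y - h)^2 / (2 * σ))) _ x from e1.add e2).deriv]
    have hexpA : -(x + h)^2 / (2 * σ) = -(x^2 + h^2) / (2 * σ) + -(x * h / σ) := by
      field_simp; ring
    have hexpB : -(x - h)^2 / (2 * σ) = -(x^2 + h^2) / (2 * σ) + x * h / σ := by
      field_simp; ring
    set t := x * h / σ with htdef
    set C := Real.exp (-(x^2 + h^2) / (2 * σ)) with hCdef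
    have hA : Real.exp (-(x + h)^2 / (2 * σ)) = C * Real.exp (-t) := by
      rw [← Real.exp_add, ← hexpA]
    have hB : Real.exp (-(x - h)^2 / (2 * σ)) = C * Real.exp t := by
      rw [← Real.exp_add, ← hexpB]
    have hkey : Real.exp (-(x + h)^2 / (2 * σ)) * (-(x + h) / σ) +
        Real.exp (-(x - h)^2 / (2 * σ)) * (-(x - h) / σ)
        = -(2 * C / σ) * (x * Real.cosh t - h * Real.sinh t) := by
      rw [hA, hB, Real.cosh_eq, Real.sinh_eq]
      field_simp; ring
    rw [hkey]
    have hCpos : 0 < 2 * C / σ := by positivity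
    have hchar : x = h * Real.tanh t ↔ x * Real.cosh t - h * Real.sinh t = 0 := by
      rw [Real.tanh_eq_sinh_div_cosh, ← mul_div_assoc, eq_div_iff (Real.cosh_pos t).ne']
      constructor <;> intro hx <;> linarith
    rw [hchar]
    constructor
    · intro h0
      rcases mul_eq_zero.mp h0 with h1 | h2
      · rw [neg_eq_zero] at h1
        exact absurd h1 hCpos.ne'
      · exact h2
    · intro h0; rw [h0, mul_zero]
  · -- Part 2 forward
    rintro ⟨x, hx, hxe⟩
    have ht : 0 < x * h / σ := by positivity
    have h1 : Real.tanh (x * h / σ) < x * h / σ := aux_tanh_lt_self ht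
    have h2 : x < h * (x * h / σ) := by
      calc x = h * Real.tanh (x * h / σ) := hxe
        _ < h * (x * h / σ) := mul_lt_mul_of_pos_left h1 hh
    have h2' : x < x * h^2 / σ := by
      rw [show x * h^2 / σ = h * (x * h / σ) by ring]
      exact h2
    rw [lt_div_iff₀ hσ] at h2'
    nlinarith
  · -- Part 3
    obtain ⟨c, hc⟩ := hex hlt
    exact ⟨c, hc, fun y hy => huniq y c hy hc⟩
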